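/- Let $({\sf M},{\sf g})$ be a complete $n$-dimensional Riemannian manifold and ${\rm Y}\subset{\sf M}$ an open connected subset whose boundary is weakly Lipschitz: there exist a constant $C>0$, a finite open cover $(U_i)_{i=1,\dots,k}$ of $\partial{\rm Y}$, and $C$-Lipschitz maps $\varphi_i: U_i\to\mathbb{R}^{n-1}$ with $(\varphi_i)_*\mathrm{vol}_{\partial{\rm Y}} \le C\cdot\mathrm{vol}_{\mathbb{R}^{n-1}}$ on $U_i$. If $V\in L^p(\partial{\rm Y}, \mathrm{vol}_{\partial{\rm Y}})$ for some $p>n-1$, then $\lim_{r\to0}\sup_{x\in{\sf M}} \int_{B_r(x)} \frac{|V(y)|}{{\sf d}(x,y)^{n-2}}\,\mathrm{vol}_{\partial{\rm Y}}(dy) = 0$. -/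

import Mathlib

open MeasureTheory Filter Topology Metric

/-- Auxiliary limit fact: `c * (ofReal r) ^ δ → 0` as `r → 0⁺` when `c ≠ ∞` and `δ > 0`. -/
lemma surface_lp_kato_aux_tendsto {c : ENNReal} (hc : c ≠ ⊤) {δ : ℝ} (hδ : 0 < δ) :
    Tendsto (fun r : ℝ => c * ENNReal.ofReal r ^ δ) (𝓝[>] (0:ℝ)) (𝓝 0) := by
  have h1 : Tendsto (fun r : ℝ => ENNReal.ofReal r) (𝓝[>] (0:ℝ)) (𝓝 0) := by
    have := ENNReal.continuous_ofReal.tendsto (0:ℝ)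
    simpa using this.mono_left nhdsWithin_le_nhds
  exact (ENNReal.tendsto_const_mul_rpow_nhds_zero_of_pos hc hδ).comp h1

/-- `L^p` criterion for the density of a surface measure to lie in the Kato class:
if the boundary of an open connected set `Y` is weakly Lipschitz and
`V ∈ L^p(∂Y, vol_{∂Y})` for some `p > n-1`, then the localized Riesz potential of `|V|`
with respect to the surface measure tends to zero uniformly as the radius shrinks. -/
theorem surface_lp_kato
    {M : Type*} [MetricSpace M] [CompleteSpace M] [MeasurableSpace M] [BorelSpace M]
    (n : ℕ) (hn : 2 ≤ n)
    (Y : Set M) (hYopen : IsOpen Y) (hYconn : IsConnected Y)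
    (σ : Measure M)
    (hσsupp : ∀ s : Set M, MeasurableSet s → s ∩ frontier Y = ∅ → σ s = 0)
    (k : ℕ) (U : Fin k → Set M) (hUopen : ∀ i, IsOpen (U i))
    (hcover : frontier Y ⊆ ⋃ i, U i)
    (C : NNReal) (hC : 0 < C)
    (φ : Fin k → M → EuclideanSpace ℝ (Fin (n - 1)))
    (hφlip : ∀ i, LipschitzOnWith C (φ i) (U i))
    (hφpush : ∀ i, ∀ s : Set (EuclideanSpace ℝ (Fin (n - 1))), MeasurableSet s →
      σ ((φ i) ⁻¹' s ∩ U i) ≤ (C : ENNReal) * volume s)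
    (p : ℝ) (hp : (n : ℝ) - 1 < p)
    (V : M → ℝ) (hV : MemLp V (ENNReal.ofReal p) σ) :
    Tendsto
      (fun r : ℝ => ⨆ x : M,
        ∫⁻ y in Metric.ball x r, ENNReal.ofReal (|V y| / dist x y ^ ((n : ℝ) - 2)) ∂σ)
      (𝓝[>] 0) (𝓝 0) := by
  classical
  have hn' : (2:ℝ) ≤ (n:ℝ) := by exact_mod_cast hn
  have hn1 : (1:ℝ) ≤ (n:ℝ) - 1 := by linarith
  have hp1 : 1 < p := lt_of_le_of_lt hn1 hp
  have hppos : 0 < p := by linarith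
  set q : ℝ := p / (p - 1) with hqdef
  have hpq : p.HolderConjugate q := Real.HolderConjugate.conjExponent hp1
  have hq1 : 1 < q := hpq.symm.lt
  have hqpos : 0 < q := by linarith
  have hn2 : (0:ℝ) ≤ (n:ℝ) - 2 := by linarith
  set β : ℝ := ((n:ℝ) - 2) * q with hβdef
  have hβ0 : 0 ≤ β := mul_nonneg hn2 hqpos.le
  set γ : ℝ := ((n:ℝ) - 1) - β with hγdef
  have hγpos : 0 < γ := by
    have hps : 0 < p - 1 := by linarith
    have hβeq : β = ((n:ℝ) - 2) * p / (p - 1) := by rw [hβdef, hqdef]; ring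
    have hβlt : β < (n:ℝ) - 1 := by
      rw [hβeq, div_lt_iff₀ hps]; nlinarith
    simpa [hγdef] using sub_pos.mpr hβlt
  -- the unit-ball volume in the chart target
  set ω : ENNReal := volume (Metric.ball (0 : EuclideanSpace ℝ (Fin (n-1))) 1) with hωdef
  have hωfin : ω ≠ ⊤ := measure_ball_lt_top.ne
  have hfr : Module.finrank ℝ (EuclideanSpace ℝ (Fin (n-1))) = n - 1 :=
    finrank_euclideanSpace_fin
  have hcast : ((n - 1 : ℕ) : ℝ) = (n:ℝ) - 1 := by
    have h1 : (1:ℕ) ≤ n := by omega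
    push_cast [Nat.cast_sub h1]
    ring
  -- the Ahlfors-type upper bound on σ of balls
  set K : ENNReal := (k : ENNReal) *
      ((C : ENNReal) * (ENNReal.ofReal (2*(C:ℝ)) ^ ((n:ℝ) - 1) * ω)) with hKdef
  have hKfin : K ≠ ⊤ := by
    refine ENNReal.mul_ne_top (ENNReal.natCast_ne_top k) (ENNReal.mul_ne_top ENNReal.coe_ne_top
      (ENNReal.mul_ne_top (ENNReal.rpow_ne_top_of_nonneg (by linarith) ENNReal.ofReal_ne_top)
        hωfin))
  have hball : ∀ (x : M) (s : ℝ), 0 < s →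
      σ (Metric.ball x s) ≤ K * ENNReal.ofReal s ^ ((n:ℝ) - 1) := by
    intro x s hs
    have hmeas_out : σ (Metric.ball x s \ ⋃ i, U i) = 0 := by
      apply hσsupp _ (measurableSet_ball.diff (MeasurableSet.iUnion fun i =>
        (hUopen i).measurableSet))
      apply Set.eq_empty_of_forall_notMem
      rintro y ⟨⟨_, hyn⟩, hyf⟩
      exact hyn (hcover hyf)
    have hsub : Metric.ball x s ⊆
        (⋃ i, Metric.ball x s ∩ U i) ∪ (Metric.ball x s \ ⋃ i, U i) := by
      intro y hy
      by_cases h : y ∈ ⋃ i, U i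
      · obtain ⟨i, hi⟩ := Set.mem_iUnion.1 h
        exact Or.inl (Set.mem_iUnion.2 ⟨i, hy, hi⟩)
      · exact Or.inr ⟨hy, h⟩
    have hone : ∀ i, σ (Metric.ball x s ∩ U i) ≤
        (C : ENNReal) * (ENNReal.ofReal ((2*(C:ℝ)*s) ^ (n-1)) * ω) := by
      intro i
      rcases (Metric.ball x s ∩ U i).eq_empty_or_nonempty with he | ⟨y0, hy0b, hy0U⟩
      · simp [he]
      · have hsub2 : Metric.ball x s ∩ U i ⊆
            φ i ⁻¹' (Metric.closedBall (φ i y0) (2*(C:ℝ)*s)) ∩ U i := by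
          rintro y ⟨hyb, hyU⟩
          refine ⟨?_, hyU⟩
          have h1 : dist (φ i y) (φ i y0) ≤ (C:ℝ) * dist y y0 :=
            (hφlip i).dist_le_mul y hyU y0 hy0U
          have h2 : dist y y0 ≤ dist y x + dist y0 x := dist_triangle_right y y0 x
          have h3 : dist y x < s := mem_ball.1 hyb
          have h4 : dist y0 x < s := mem_ball.1 hy0b
          have hC0 : (0:ℝ) ≤ (C:ℝ) := C.coe_nonneg
          simp only [Set.mem_preimage, Metric.mem_closedBall]
          nlinarith
        calc σ (Metric.ball x s ∩ U i)
            ≤ σ (φ i ⁻¹' (Metric.closedBall (φ i y0) (2*(C:ℝ)*s)) ∩ U i) :=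
              measure_mono hsub2
          _ ≤ (C:ENNReal) * volume (Metric.closedBall (φ i y0) (2*(C:ℝ)*s)) :=
              hφpush i _ measurableSet_closedBall
          _ = (C:ENNReal) * (ENNReal.ofReal ((2*(C:ℝ)*s) ^ (n-1)) * ω) := by
              rw [Measure.addHaar_closedBall _ _ (by positivity), hfr]
    have hofreal : ENNReal.ofReal ((2*(C:ℝ)*s) ^ (n-1)) =
        ENNReal.ofReal (2*(C:ℝ)) ^ ((n:ℝ)-1) * ENNReal.ofReal s ^ ((n:ℝ)-1) := by
      have hCpos : (0:ℝ) < 2*(C:ℝ) := by positivity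
      calc ENNReal.ofReal ((2*(C:ℝ)*s) ^ (n-1))
          = ENNReal.ofReal ((2*(C:ℝ)*s) ^ ((n:ℝ)-1)) := by
            rw [← Real.rpow_natCast (2*(C:ℝ)*s) (n-1), hcast]
        _ = ENNReal.ofReal ((2*(C:ℝ)) ^ ((n:ℝ)-1) * s ^ ((n:ℝ)-1)) := by
            rw [Real.mul_rpow hCpos.le hs.le]
        _ = ENNReal.ofReal (2*(C:ℝ)) ^ ((n:ℝ)-1) * ENNReal.ofReal s ^ ((n:ℝ)-1) := by
            rw [ENNReal.ofReal_mul (by positivity), ENNReal.ofReal_rpow_of_pos hCpos,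
              ENNReal.ofReal_rpow_of_pos hs]
    calc σ (Metric.ball x s)
        ≤ σ ((⋃ i, Metric.ball x s ∩ U i) ∪ (Metric.ball x s \ ⋃ i, U i)) :=
          measure_mono hsub
      _ ≤ σ (⋃ i, Metric.ball x s ∩ U i) + σ (Metric.ball x s \ ⋃ i, U i) :=
          measure_union_le _ _
      _ = σ (⋃ i, Metric.ball x s ∩ U i) := by rw [hmeas_out, add_zero]
      _ ≤ ∑' i : Fin k, σ (Metric.ball x s ∩ U i) := measure_iUnion_le _
      _ ≤ ∑' _i : Fin k, (C : ENNReal) * (ENNReal.ofReal ((2*(C:ℝ)*s) ^ (n-1)) * ω) :=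
          ENNReal.tsum_le_tsum fun i => hone i
      _ = (k : ENNReal) * ((C : ENNReal) * (ENNReal.ofReal ((2*(C:ℝ)*s) ^ (n-1)) * ω)) := by
          rw [tsum_fintype]
          simp [Finset.sum_const, Finset.card_univ, nsmul_eq_mul]
      _ = K * ENNReal.ofReal s ^ ((n:ℝ)-1) := by
          rw [hofreal, hKdef]; ring
  -- σ gives no mass to points
  have hσpt : ∀ x : M, σ {x} = 0 := by
    intro x
    have hle : σ {x} ≤ 0 := by
      refine ge_of_tendsto (surface_lp_kato_aux_tendsto hKfin
        (show (0:ℝ) < (n:ℝ) - 1 by linarith)) ?_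
      filter_upwards [self_mem_nhdsWithin] with s hs
      exact (measure_mono (Set.singleton_subset_iff.2 (Metric.mem_ball_self hs))).trans
        (hball x s hs)
    exact le_antisymm hle zero_le
  -- the Lp norm of V
  set f : M → ENNReal := fun y => ENNReal.ofReal |V y| with hfdef
  set A : ENNReal := ∫⁻ y, f y ^ p ∂σ with hAdef
  have hAfin : A ≠ ⊤ := by
    have h1 : ENNReal.ofReal p ≠ 0 := by
      simp [ENNReal.ofReal_eq_zero, not_le, hppos]
    have h3 : (∫⁻ y, ‖V y‖ₑ ^ p ∂σ) = A := by
      rw [hAdef]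
      refine lintegral_congr fun y => ?_
      rw [hfdef, Real.enorm_eq_ofReal_abs]
    have h2 : eLpNorm V (ENNReal.ofReal p) σ = A ^ (1/p) := by
      rw [eLpNorm_eq_lintegral_rpow_enorm_toReal h1 ENNReal.ofReal_ne_top,
        ENNReal.toReal_ofReal hppos.le, h3]
    have h4 : A = (eLpNorm V (ENNReal.ofReal p) σ) ^ p := by
      rw [h2, ← ENNReal.rpow_mul, one_div, inv_mul_cancel₀ hppos.ne', ENNReal.rpow_one]
    rw [h4]
    exact ENNReal.rpow_ne_top_of_nonneg hppos.le hV.2.ne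
  -- geometric ratio
  set ρ : ENNReal := ENNReal.ofReal ((2:ℝ) ^ (-γ)) with hρdef
  have hρlt : ρ < 1 := by
    rw [hρdef, ← ENNReal.ofReal_one]
    exact (ENNReal.ofReal_lt_ofReal_iff one_pos).2
      (Real.rpow_lt_one_of_one_lt_of_neg one_lt_two (by linarith))
  set K' : ENNReal := K * ENNReal.ofReal ((2:ℝ) ^ β) * (1 - ρ)⁻¹ with hK'def
  have hK'fin : K' ≠ ⊤ := by
    refine ENNReal.mul_ne_top (ENNReal.mul_ne_top hKfin ENNReal.ofReal_ne_top) ?_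
    rw [ENNReal.inv_ne_top]
    exact (tsub_pos_of_lt hρlt).ne'
  -- the main pointwise-in-(x,r) bound
  have hmain : ∀ (r : ℝ), 0 < r → ∀ x : M,
      (∫⁻ y in Metric.ball x r, ENNReal.ofReal (|V y| / dist x y ^ ((n:ℝ)-2)) ∂σ)
        ≤ A ^ (1/p) * (K' * ENNReal.ofReal r ^ γ) ^ (1/q) := by
    intro r hr x
    set g : M → ENNReal := fun y => ENNReal.ofReal (dist x y) ^ (-((n:ℝ)-2)) with hgdef
    have hpoint : ∀ y, ENNReal.ofReal (|V y| / dist x y ^ ((n:ℝ)-2)) ≤ f y * g y := by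
      intro y
      rcases eq_or_lt_of_le (dist_nonneg : (0:ℝ) ≤ dist x y) with hd | hd
      · rcases eq_or_lt_of_le hn2 with h2 | h2
        · simp [hgdef, hfdef, ← hd, ← h2]
        · have hz : dist x y ^ ((n:ℝ)-2) = 0 := by
            rw [← hd]; exact Real.zero_rpow (ne_of_gt h2)
          simp [hz]
      · have h1 : |V y| / dist x y ^ ((n:ℝ)-2) = |V y| * (dist x y) ^ (-((n:ℝ)-2)) := by
          rw [Real.rpow_neg hd.le, div_eq_mul_inv]
        calc ENNReal.ofReal (|V y| / dist x y ^ ((n:ℝ)-2))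
            = ENNReal.ofReal |V y| * ENNReal.ofReal (dist x y) ^ (-((n:ℝ)-2)) := by
              rw [h1, ENNReal.ofReal_mul (abs_nonneg _), ← ENNReal.ofReal_rpow_of_pos hd]
          _ = f y * g y := rfl
          _ ≤ f y * g y := le_refl _
    have hfmeas : AEMeasurable f (σ.restrict (Metric.ball x r)) := by
      have h := hV.1.aemeasurable.restrict (s := Metric.ball x r)
      exact (continuous_abs.measurable.comp_aemeasurable h).ennreal_ofReal
    have hgcont : Continuous g :=
      ENNReal.continuous_rpow_const.comp
        (ENNReal.continuous_ofReal.comp (continuous_const.dist continuous_id))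
    have hold := ENNReal.lintegral_mul_le_Lp_mul_Lq (σ.restrict (Metric.ball x r)) hpq
      hfmeas hgcont.measurable.aemeasurable
    simp only [Pi.mul_apply] at hold
    -- the dyadic bound on the q-integral of the kernel
    have hgq : ∀ y, g y ^ q = ENNReal.ofReal (dist x y) ^ (-β) := by
      intro y
      rw [hgdef, ← ENNReal.rpow_mul]
      congr 1
      rw [hβdef]; ring
    set S : ℕ → Set M := fun j =>
      Metric.ball x (r * 2⁻¹ ^ j) \ Metric.ball x (r * 2⁻¹ ^ (j+1)) with hSdef
    have hcoverS : Metric.ball x r \ {x} ⊆ ⋃ j, S j := by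
      rintro y ⟨hyb, hyx⟩
      have hd0 : 0 < dist y x := dist_pos.2 (by simpa using hyx)
      have hdr : dist y x < r := mem_ball.1 hyb
      have hex : ∃ m : ℕ, r * (2⁻¹:ℝ) ^ m ≤ dist y x := by
        obtain ⟨m, hm⟩ := exists_pow_lt_of_lt_one (div_pos hd0 hr)
          (by norm_num : (2⁻¹:ℝ) < 1)
        refine ⟨m, ?_⟩
        rw [mul_comm]
        exact le_of_lt ((lt_div_iff₀ hr).1 hm)
      have hspec : r * 2⁻¹ ^ (Nat.find hex) ≤ dist y x := Nat.find_spec hex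
      have hm0 : Nat.find hex ≠ 0 := by
        intro h
        rw [h] at hspec
        simp only [pow_zero, mul_one] at hspec
        linarith
      obtain ⟨j, hj⟩ := Nat.exists_eq_succ_of_ne_zero hm0
      have hmin : ¬ (r * 2⁻¹ ^ j ≤ dist y x) := Nat.find_min hex (by omega)
      refine Set.mem_iUnion.2 ⟨j, mem_ball.2 (lt_of_not_ge hmin), fun hmem => ?_⟩
      rw [hj] at hspec
      exact absurd (mem_ball.1 hmem) (not_lt.2 hspec)
    have hterm : ∀ j : ℕ, (∫⁻ y in S j, ENNReal.ofReal (dist x y) ^ (-β) ∂σ) ≤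
        (K * ENNReal.ofReal ((2:ℝ)^β) * ENNReal.ofReal r ^ γ) * ρ ^ j := by
      intro j
      have hrj1 : (0:ℝ) < r * 2⁻¹ ^ (j+1) := by positivity
      have hrj : (0:ℝ) < r * 2⁻¹ ^ j := by positivity
      have hbound : ∀ y ∈ S j, ENNReal.ofReal (dist x y) ^ (-β) ≤
          ENNReal.ofReal (r * 2⁻¹ ^ (j+1)) ^ (-β) := by
        rintro y ⟨_, hy2⟩
        have hge : r * 2⁻¹ ^ (j+1) ≤ dist x y := by
          rw [dist_comm]
          exact not_lt.1 fun h => hy2 (mem_ball.2 h)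
        rw [ENNReal.rpow_neg, ENNReal.rpow_neg]
        exact ENNReal.inv_le_inv.2
          (ENNReal.rpow_le_rpow (ENNReal.ofReal_le_ofReal hge) hβ0)
      have hreal : ((r * 2⁻¹ ^ (j+1)) : ℝ) ^ (-β) * (r * 2⁻¹ ^ j) ^ ((n:ℝ)-1) =
          (2:ℝ)^β * (r ^ γ * ((2:ℝ)^(-γ)) ^ j) := by
        have h2pos : (0:ℝ) < 2 := two_pos
        have e3 : ((2:ℝ)⁻¹) ^ (-β) = (2:ℝ) ^ β := by
          rw [Real.inv_rpow h2pos.le, ← Real.rpow_neg h2pos.le, neg_neg]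
        have e4 : ((r * 2⁻¹ ^ j):ℝ) ^ (-β) * (r * 2⁻¹ ^ j) ^ ((n:ℝ)-1) =
            (r * 2⁻¹ ^ j) ^ γ := by
          rw [← Real.rpow_add hrj]
          congr 1
          rw [hγdef]; ring
        have e5 : ((r * 2⁻¹ ^ j):ℝ) ^ γ = r ^ γ * ((2:ℝ)^(-γ)) ^ j := by
          rw [Real.mul_rpow hr.le (by positivity)]
          congr 1
          rw [← Real.rpow_natCast (2⁻¹:ℝ) j, ← Real.rpow_mul (by norm_num : (0:ℝ) ≤ 2⁻¹),
            mul_comm, Real.rpow_mul (by norm_num : (0:ℝ) ≤ 2⁻¹), Real.rpow_natCast]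
          congr 1
          rw [Real.inv_rpow h2pos.le, ← Real.rpow_neg h2pos.le]
        calc ((r * 2⁻¹ ^ (j+1)) : ℝ) ^ (-β) * (r * 2⁻¹ ^ j) ^ ((n:ℝ)-1)
            = (r * 2⁻¹ ^ j * 2⁻¹) ^ (-β) * (r * 2⁻¹ ^ j) ^ ((n:ℝ)-1) := by
              rw [pow_succ, mul_assoc]
          _ = ((r * 2⁻¹ ^ j) ^ (-β) * (2⁻¹:ℝ) ^ (-β)) * (r * 2⁻¹ ^ j) ^ ((n:ℝ)-1) := by
              rw [Real.mul_rpow (by positivity) (by positivity)]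
          _ = ((r * 2⁻¹ ^ j) ^ (-β) * (r * 2⁻¹ ^ j) ^ ((n:ℝ)-1)) * (2⁻¹:ℝ) ^ (-β) := by
              ring
          _ = (2:ℝ)^β * (r ^ γ * ((2:ℝ)^(-γ)) ^ j) := by
              rw [e4, e5, e3]; ring
      calc (∫⁻ y in S j, ENNReal.ofReal (dist x y) ^ (-β) ∂σ)
          ≤ ∫⁻ _y in S j, ENNReal.ofReal (r * 2⁻¹ ^ (j+1)) ^ (-β) ∂σ :=
            setLIntegral_mono measurable_const hbound
        _ = ENNReal.ofReal (r * 2⁻¹ ^ (j+1)) ^ (-β) * σ (S j) := setLIntegral_const _ _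
        _ ≤ ENNReal.ofReal (r * 2⁻¹ ^ (j+1)) ^ (-β) *
            (K * ENNReal.ofReal (r * 2⁻¹ ^ j) ^ ((n:ℝ)-1)) :=
            mul_le_mul_right
              ((measure_mono Set.diff_subset).trans (hball x _ hrj)) _
        _ = (K * ENNReal.ofReal ((2:ℝ)^β) * ENNReal.ofReal r ^ γ) * ρ ^ j := by
            rw [hρdef, ENNReal.ofReal_rpow_of_pos hrj1, ENNReal.ofReal_rpow_of_pos hrj,
              ENNReal.ofReal_rpow_of_pos hr,
              ← ENNReal.ofReal_pow (by positivity : (0:ℝ) ≤ (2:ℝ)^(-γ))]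
            rw [show ENNReal.ofReal ((r * 2⁻¹ ^ (j+1)) ^ (-β)) *
                (K * ENNReal.ofReal ((r * 2⁻¹ ^ j) ^ ((n:ℝ)-1))) =
                K * ENNReal.ofReal (((r * 2⁻¹ ^ (j+1)) ^ (-β)) *
                  ((r * 2⁻¹ ^ j) ^ ((n:ℝ)-1))) from by
              rw [ENNReal.ofReal_mul (by positivity)]; ring]
            rw [hreal, ENNReal.ofReal_mul (by positivity),
              ENNReal.ofReal_mul (by positivity)]
            ring
    have hJ : (∫⁻ y in Metric.ball x r, g y ^ q ∂σ) ≤ K' * ENNReal.ofReal r ^ γ := by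
      have hGrw : (∫⁻ y in Metric.ball x r, g y ^ q ∂σ) =
          ∫⁻ y in Metric.ball x r, ENNReal.ofReal (dist x y) ^ (-β) ∂σ :=
        lintegral_congr fun y => hgq y
      rw [hGrw]
      calc ∫⁻ y in Metric.ball x r, ENNReal.ofReal (dist x y) ^ (-β) ∂σ
          ≤ ∫⁻ y in (Metric.ball x r \ {x}) ∪ {x},
              ENNReal.ofReal (dist x y) ^ (-β) ∂σ := by
            refine lintegral_mono_set fun y hy => ?_
            by_cases h : y = x
            · exact Or.inr (by simp [h])
            · exact Or.inl ⟨hy, h⟩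
        _ ≤ (∫⁻ y in Metric.ball x r \ {x}, ENNReal.ofReal (dist x y) ^ (-β) ∂σ) +
            ∫⁻ y in ({x} : Set M), ENNReal.ofReal (dist x y) ^ (-β) ∂σ :=
            lintegral_union_le _ _ _
        _ = ∫⁻ y in Metric.ball x r \ {x}, ENNReal.ofReal (dist x y) ^ (-β) ∂σ := by
            rw [setLIntegral_measure_zero _ _ (hσpt x), add_zero]
        _ ≤ ∫⁻ y in ⋃ j, S j, ENNReal.ofReal (dist x y) ^ (-β) ∂σ :=
            lintegral_mono_set hcoverS
        _ ≤ ∑' j, ∫⁻ y in S j, ENNReal.ofReal (dist x y) ^ (-β) ∂σ :=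
            lintegral_iUnion_le _ _
        _ ≤ ∑' j : ℕ, (K * ENNReal.ofReal ((2:ℝ)^β) * ENNReal.ofReal r ^ γ) * ρ ^ j :=
            ENNReal.tsum_le_tsum hterm
        _ = (K * ENNReal.ofReal ((2:ℝ)^β) * ENNReal.ofReal r ^ γ) * (1 - ρ)⁻¹ := by
            rw [ENNReal.tsum_mul_left, ENNReal.tsum_geometric]
        _ = K' * ENNReal.ofReal r ^ γ := by
            rw [hK'def]; ring
    calc (∫⁻ y in Metric.ball x r, ENNReal.ofReal (|V y| / dist x y ^ ((n:ℝ)-2)) ∂σ)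
        ≤ ∫⁻ y in Metric.ball x r, f y * g y ∂σ := lintegral_mono hpoint
      _ ≤ (∫⁻ y in Metric.ball x r, f y ^ p ∂σ) ^ (1/p) *
          (∫⁻ y in Metric.ball x r, g y ^ q ∂σ) ^ (1/q) := hold
      _ ≤ A ^ (1/p) * (K' * ENNReal.ofReal r ^ γ) ^ (1/q) := by
          refine mul_le_mul' (ENNReal.rpow_le_rpow ?_ (by positivity))
            (ENNReal.rpow_le_rpow hJ (by positivity))
          rw [hAdef]
          exact setLIntegral_le_lintegral _ _
  -- assemble: the bound is `c * (ofReal r) ^ δ`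
  set c : ENNReal := A ^ (1/p) * K' ^ (1/q) with hcdef
  have hcfin : c ≠ ⊤ :=
    ENNReal.mul_ne_top (ENNReal.rpow_ne_top_of_nonneg (by positivity) hAfin)
      (ENNReal.rpow_ne_top_of_nonneg (by positivity) hK'fin)
  set δ : ℝ := γ * (1/q) with hδdef
  have hδpos : 0 < δ := by
    rw [hδdef]; positivity
  have hBrw : ∀ r : ℝ, A ^ (1/p) * (K' * ENNReal.ofReal r ^ γ) ^ (1/q) =
      c * ENNReal.ofReal r ^ δ := by
    intro r
    rw [ENNReal.mul_rpow_of_ne_top hK'fin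
      (ENNReal.rpow_ne_top_of_nonneg hγpos.le ENNReal.ofReal_ne_top),
      ← ENNReal.rpow_mul, hcdef, hδdef, mul_assoc]
  have hupper : ∀ᶠ r in 𝓝[>] (0:ℝ),
      (⨆ x : M, ∫⁻ y in Metric.ball x r,
        ENNReal.ofReal (|V y| / dist x y ^ ((n:ℝ)-2)) ∂σ) ≤
      c * ENNReal.ofReal r ^ δ := by
    filter_upwards [self_mem_nhdsWithin] with r hr
    exact iSup_le fun x => (hmain r hr x).trans_eq (hBrw r)
  exact tendsto_of_tendsto_of_tendsto_of_le_of_le' tendsto_const_nhds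
    (surface_lp_kato_aux_tendsto hcfin hδpos)
    (Eventually.of_forall fun r => zero_le) hupper
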